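/- Let v ∈ ℝ² be nonzero and let q ∈ (0, π). Then every point w in the topological frontier of C^F_{π/2−q/2}(v) ∪ C^B_{π/2−q/2}(v) satisfies ‖w‖ ≥ ‖v‖·sin(q/2). In other words, the distance from the origin to the boundary of the union of the forward and backward cones at v is at least ‖v‖·sin(q/2). -/

import Mathlib

open InnerProductGeometry Real Set Metric Pointwise RealInnerProductSpace

/-- `v` rotated counterclockwise by `π/2`. -/
noncomputable def perp (v : EuclideanSpace ℝ (Fin 2)) : EuclideanSpace ℝ (Fin 2) :=
  (WithLp.equiv 2 (Fin 2 → ℝ)).symm ![-(v 1), v 0]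

/-- The forward cone `C^F_{π/2 - q}(v)`. -/
noncomputable def coneF (q : ℝ) (v : EuclideanSpace ℝ (Fin 2)) :
    Set (EuclideanSpace ℝ (Fin 2)) :=
  {v} ∪ {w | w ≠ v ∧ angle (w - v) (perp v) ≤ π / 2 - q}

/-- The backward cone `C^B_{π/2 - q}(v)`. -/
noncomputable def coneB (q : ℝ) (v : EuclideanSpace ℝ (Fin 2)) :
    Set (EuclideanSpace ℝ (Fin 2)) :=
  {v} ∪ {w | w ≠ v ∧ angle (w - v) (-(perp v)) ≤ π / 2 - q}

/-- The cone `W_{v,c}` about direction `v` with apex `0` and half-aperture `c`. -/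
noncomputable def coneW (v : EuclideanSpace ℝ (Fin 2)) (c : ℝ) :
    Set (EuclideanSpace ℝ (Fin 2)) :=
  {0} ∪ {z | z ≠ 0 ∧ angle z v ≤ c}

/-- The set of `(q,c)`-regeneration sites of `Γ`, as seen from the origin. -/
noncomputable def RG (q c : ℝ) (Γ : Set (EuclideanSpace ℝ (Fin 2))) :
    Set (EuclideanSpace ℝ (Fin 2)) :=
  {v | v ∈ Γ ∧ v ≠ 0 ∧ Γ ∩ coneW v c ⊆ coneF q v ∪ coneB q v}

/-- The set of `(q,c)`-regeneration sites of `Γ` as seen from `x`: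
`RG_{q,c,x}(Γ) = x + RG_{q,c}(Γ - x)`. -/
noncomputable def RGat (q c : ℝ) (x : EuclideanSpace ℝ (Fin 2))
    (Γ : Set (EuclideanSpace ℝ (Fin 2))) : Set (EuclideanSpace ℝ (Fin 2)) :=
  (fun z => x + z) '' RG q c ((fun z => z - x) '' Γ)

lemma arccos_antitone' : Antitone Real.arccos := fun x y h => by
  simp only [Real.arccos_eq_pi_div_two_sub_arcsin]
  exact sub_le_sub_left (Real.monotone_arcsin h) _

lemma inner_coords' (x y : EuclideanSpace ℝ (Fin 2)) : ⟪x, y⟫ = x 0 * y 0 + x 1 * y 1 := by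
  simp [PiLp.inner_apply, RCLike.inner_apply, Fin.sum_univ_two, mul_comm]

lemma sub_coords' (x y : EuclideanSpace ℝ (Fin 2)) (i : Fin 2) : (x - y) i = x i - y i := rfl

lemma norm_sq_coords' (x : EuclideanSpace ℝ (Fin 2)) : ‖x‖^2 = x 0 ^2 + x 1 ^2 := by
  rw [← real_inner_self_eq_norm_sq, inner_coords']; ring

lemma perp_coords' (v : EuclideanSpace ℝ (Fin 2)) :
    perp v 0 = -(v 1) ∧ perp v 1 = v 0 := by
  constructor <;> simp [perp]

lemma perp_norm' (v : EuclideanSpace ℝ (Fin 2)) : ‖perp v‖ = ‖v‖ := by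
  have h := norm_sq_coords' (perp v)
  rw [(perp_coords' v).1, (perp_coords' v).2, neg_pow] at h
  have h2 := norm_sq_coords' v
  nlinarith [norm_nonneg v, norm_nonneg (perp v)]

lemma angle_le_iff' (u p : EuclideanSpace ℝ (Fin 2)) (hu : u ≠ 0) (hp : p ≠ 0)
    (t : ℝ) (ht : 0 ≤ t) (ht' : t ≤ π/2) :
    angle u p ≤ π/2 - t ↔ Real.sin t * (‖u‖ * ‖p‖) ≤ ⟪u, p⟫ := by
  have hn : 0 < ‖u‖ * ‖p‖ := mul_pos (norm_pos_iff.2 hu) (norm_pos_iff.2 hp)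
  constructor
  · intro h
    have hc := Real.cos_le_cos_of_nonneg_of_le_pi (angle_nonneg u p)
      (by linarith [Real.pi_pos] : π/2 - t ≤ π) h
    rw [cos_angle, Real.cos_pi_div_two_sub] at hc
    rw [le_div_iff₀ hn] at hc
    linarith
  · intro h
    have h1 : Real.sin t ≤ ⟪u, p⟫ / (‖u‖ * ‖p‖) := by
      rw [le_div_iff₀ hn]; linarith
    calc angle u p = Real.arccos (⟪u, p⟫ / (‖u‖ * ‖p‖)) := rfl
      _ ≤ Real.arccos (Real.sin t) := arccos_antitone' h1
      _ = π/2 - t := by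
          rw [← Real.cos_pi_div_two_sub, Real.arccos_cos (by linarith) (by linarith [Real.pi_pos])]

set_option maxHeartbeats 1000000 in
/-- The distance from the origin to the boundary of the union of the forward and
backward cones `C^F_{π/2 - q/2}(v) ∪ C^B_{π/2 - q/2}(v)` is at least `‖v‖·sin(q/2)`. -/
theorem stmt7 (v : EuclideanSpace ℝ (Fin 2)) (hv : v ≠ 0) (q : ℝ)
    (hq : 0 < q) (hq' : q < π)
    (w : EuclideanSpace ℝ (Fin 2))
    (hw : w ∈ frontier (coneF (q / 2) v ∪ coneB (q / 2) v)) :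
    ‖v‖ * Real.sin (q / 2) ≤ ‖w‖ := by
  set σ := Real.sin (q / 2) with hσdef
  have hp : perp v ≠ 0 := by
    intro h
    apply hv
    have := perp_norm' v
    rw [h, norm_zero] at this
    exact norm_eq_zero.mp this.symm
  have hσpos : 0 < σ := Real.sin_pos_of_pos_of_lt_pi (by linarith) (by linarith [Real.pi_pos])
  have hcpos : 0 < Real.cos (q/2) :=
    Real.cos_pos_of_mem_Ioo ⟨by linarith [Real.pi_pos], by linarith⟩
  have hσ1 : σ^2 < 1 := by
    have := Real.sin_sq_add_cos_sq (q/2)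
    nlinarith
  have ht : (0:ℝ) ≤ q/2 := by linarith
  have ht' : q/2 ≤ π/2 := by linarith
  -- Set equality
  have hset : coneF (q / 2) v ∪ coneB (q / 2) v
      = {x | σ * (‖x - v‖ * ‖v‖) ≤ |⟪x - v, perp v⟫|} := by
    ext x
    by_cases hx : x = v
    · subst hx
      simp [coneF, coneB]
    · have hu : x - v ≠ 0 := sub_ne_zero.mpr hx
      have h1 : angle (x - v) (perp v) ≤ π/2 - q/2 ↔
          σ * (‖x - v‖ * ‖perp v‖) ≤ ⟪x - v, perp v⟫ :=
        angle_le_iff' _ _ hu hp _ ht ht'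
      have h2 : angle (x - v) (-(perp v)) ≤ π/2 - q/2 ↔
          σ * (‖x - v‖ * ‖perp v‖) ≤ -⟪x - v, perp v⟫ := by
        have := angle_le_iff' (x - v) (-(perp v)) hu (neg_ne_zero.mpr hp) _ ht ht'
        rwa [norm_neg, inner_neg_right] at this
      simp only [coneF, coneB, Set.mem_union, Set.mem_singleton_iff, Set.mem_setOf_eq,
        Set.union_def, perp_norm' v] at *
      constructor
      · rintro (⟨h | h⟩ | ⟨h | h⟩)
        · exact absurd h hx
        · exact le_trans (h1.mp h.2) (le_abs_self _)
        · exact absurd h hx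
        · exact le_trans (h2.mp h.2) (neg_le_abs _)
      · intro h
        rcases le_abs.mp h with h' | h'
        · exact Or.inl (Or.inr ⟨hx, h1.mpr h'⟩)
        · exact Or.inr (Or.inr ⟨hx, h2.mpr h'⟩)
  rw [hset] at hw
  -- the set is closed; strict inequality points are interior
  have hcont1 : Continuous fun x : EuclideanSpace ℝ (Fin 2) => σ * (‖x - v‖ * ‖v‖) :=
    continuous_const.mul (((continuous_id.sub continuous_const).norm).mul continuous_const)
  have hcont2 : Continuous fun x : EuclideanSpace ℝ (Fin 2) => |⟪x - v, perp v⟫| :=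
    (Continuous.inner (continuous_id.sub continuous_const) continuous_const).abs
  have hcl : IsClosed {x : EuclideanSpace ℝ (Fin 2) | σ * (‖x - v‖ * ‖v‖) ≤ |⟪x - v, perp v⟫|} :=
    isClosed_le hcont1 hcont2
  have hle : σ * (‖w - v‖ * ‖v‖) ≤ |⟪w - v, perp v⟫| := hcl.frontier_subset hw
  have hop : IsOpen {x : EuclideanSpace ℝ (Fin 2) | σ * (‖x - v‖ * ‖v‖) < |⟪x - v, perp v⟫|} :=
    isOpen_lt hcont1 hcont2
  have hnotlt : ¬ σ * (‖w - v‖ * ‖v‖) < |⟪w - v, perp v⟫| := by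
    intro hlt
    have hsub2 : {x : EuclideanSpace ℝ (Fin 2) | σ * (‖x - v‖ * ‖v‖) < |⟪x - v, perp v⟫|} ⊆
        {x : EuclideanSpace ℝ (Fin 2) | σ * (‖x - v‖ * ‖v‖) ≤ |⟪x - v, perp v⟫|} :=
      Set.setOf_subset_setOf.mpr fun x => le_of_lt
    have hUsub : {x : EuclideanSpace ℝ (Fin 2) | σ * (‖x - v‖ * ‖v‖) < |⟪x - v, perp v⟫|} ⊆
        interior {x : EuclideanSpace ℝ (Fin 2) | σ * (‖x - v‖ * ‖v‖) ≤ |⟪x - v, perp v⟫|} :=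
      hop.subset_interior_iff.mpr hsub2
    exact hw.2 (hUsub hlt)
  have heq : σ * (‖w - v‖ * ‖v‖) = |⟪w - v, perp v⟫| := le_antisymm hle (not_lt.mp hnotlt)
  -- algebra
  set A := ⟪w, v⟫ with hA
  set B := ⟪w, perp v⟫ with hB
  have hvp : ⟪v, perp v⟫ = 0 := by
    rw [inner_coords', (perp_coords' v).1, (perp_coords' v).2]; ring
  have hBp : ⟪w - v, perp v⟫ = B := by
    rw [inner_sub_left, hvp, sub_zero]
  have hLag : A^2 + B^2 = ‖w‖^2 * ‖v‖^2 := by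
    rw [hA, hB, inner_coords', inner_coords', (perp_coords' v).1, (perp_coords' v).2,
      norm_sq_coords', norm_sq_coords']
    ring
  have hD : ‖w - v‖^2 = ‖w‖^2 - 2*A + ‖v‖^2 := norm_sub_sq_real w v
  have hB2 : B^2 = σ^2 * ‖v‖^2 * ‖w - v‖^2 := by
    have := congrArg (fun x => x^2) heq
    simp only [hBp] at this
    rw [sq_abs] at this
    nlinarith [this]
  have hR : 0 < ‖v‖ := norm_pos_iff.2 hv
  have hkey : A^2 - 2*σ^2*‖v‖^2*A + σ^2*‖v‖^2*‖v‖^2 = ‖w‖^2*‖v‖^2*(1-σ^2) := by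
    linear_combination hLag - hB2 - σ^2*‖v‖^2*hD
  have hW2 : σ^2 * ‖v‖^2 ≤ ‖w‖^2 := by
    nlinarith [hkey, sq_nonneg (A - σ^2*‖v‖^2), mul_pos (mul_pos hR hR) (by linarith : (0:ℝ) < 1 - σ^2)]
  nlinarith [hW2, norm_nonneg w, mul_pos hR hσpos]
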